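/- arXiv:2207.12845 — 6 statements merged into one kernel-verified Lean document; each statement's English description precedes it below -/
import Mathlib

section
/- If f : ℝᵐ → ℝ is μ-strongly convex and differentiable, and A : ℝⁿ → ℝᵐ is a linear map, then g(x) = f(Ax) satisfies the Polyak-Łojasiewicz inequality on the affine set range-restricted problem: there exists μ_g > 0 such that (1/2)‖∇g(x)‖² ≥ μ_g (g(x) − g*) for all x, where g* = inf g, provided g attains its infimum. -/
open InnerProductSpace Set

/-- First-order condition for convex differentiable functions. -/
lemma aux_first_order {E : Type*} [NormedAddCommGroup E] [NormedSpace ℝ E]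
    {h : E → ℝ} (hc : ConvexOn ℝ Set.univ h) {x y : E} {φ : E →L[ℝ] ℝ}
    (hd : HasFDerivAt h φ x) : h x + φ (y - x) ≤ h y := by
  have hc' : ConvexOn ℝ Set.univ (fun t : ℝ => h (AffineMap.lineMap x y t)) := by
    exact hc.comp_affineMap (AffineMap.lineMap x y)
  have hline : HasDerivAt (fun t : ℝ => AffineMap.lineMap x y t) (y - x) (0:ℝ) := by
    have heq : (fun t : ℝ => (AffineMap.lineMap x y t : E)) = fun t : ℝ => t • (y - x) + x := by
      funext t
      simp [AffineMap.lineMap_apply_module]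
      module
    rw [heq]
    simpa using (((hasDerivAt_id (0:ℝ)).smul_const (y - x)).add_const x)
  have hx0 : (AffineMap.lineMap x y : ℝ →ᵃ[ℝ] E) 0 = x := by simp
  have hderiv : HasDerivAt (fun t : ℝ => h (AffineMap.lineMap x y t)) (φ (y - x)) 0 := by
    have := (hx0 ▸ hd).comp_hasDerivAt (0:ℝ) hline
    exact this
  have := hc'.le_slope_of_hasDerivAt (mem_univ (0:ℝ)) (mem_univ (1:ℝ)) one_pos hderiv
  rw [slope_def_field] at this
  simp only [AffineMap.lineMap_apply_one, AffineMap.lineMap_apply_zero] at this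
  have h1 : φ (y - x) ≤ h y - h x := by
    have : φ (y - x) ≤ (h y - h x) / (1 - 0) := this
    simpa using this
  linarith

set_option maxHeartbeats 1000000 in
theorem stmt_1 {n m : ℕ} (f : EuclideanSpace ℝ (Fin m) → ℝ) (μ : ℝ) (hμ : 0 < μ)
    (hdiff : Differentiable ℝ f) (hsc : StrongConvexOn Set.univ μ f)
    (A : EuclideanSpace ℝ (Fin n) →ₗ[ℝ] EuclideanSpace ℝ (Fin m))
    (g : EuclideanSpace ℝ (Fin n) → ℝ) (hg : ∀ x, g x = f (A x))
    (hattain : ∃ x₀, ∀ x, g x₀ ≤ g x) :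
    ∃ μg > 0, ∀ x, μg * (g x - ⨅ z, g z) ≤ (1/2) * ‖gradient g x‖^2 := by
  obtain ⟨x₀, hx₀⟩ := hattain
  have hginf : (⨅ z, g z) = g x₀ := le_antisymm
    (ciInf_le ⟨g x₀, by rintro _ ⟨z, rfl⟩; exact hx₀ z⟩ x₀) (le_ciInf hx₀)
  set AC : EuclideanSpace ℝ (Fin n) →L[ℝ] EuclideanSpace ℝ (Fin m) :=
    LinearMap.toContinuousLinearMap A with hAC
  have hACA : ∀ v, AC v = A v := fun v => rfl
  -- strong convexity first-order condition
  have hSC : ∀ u v : EuclideanSpace ℝ (Fin m),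
      f u + fderiv ℝ f u (v - u) + μ/2 * ‖v - u‖^2 ≤ f v := by
    intro u v
    have hconv : ConvexOn ℝ Set.univ (fun y => f y - μ/2 * ‖y‖^2) :=
      strongConvexOn_iff_convex.mp hsc
    have hns : HasFDerivAt (fun y : EuclideanSpace ℝ (Fin m) => μ/2 * ‖y‖^2)
        ((μ/2) • (2 • (innerSL ℝ u))) u :=
      ((hasStrictFDerivAt_norm_sq u).hasFDerivAt).const_smul (μ/2)
    have hd : HasFDerivAt (fun y => f y - μ/2 * ‖y‖^2)
        (fderiv ℝ f u - (μ/2) • (2 • (innerSL ℝ u))) u :=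
      (hdiff u).hasFDerivAt.sub hns
    have := aux_first_order hconv (y := v) hd
    simp only [ContinuousLinearMap.sub_apply, ContinuousLinearMap.smul_apply,
      ContinuousLinearMap.coe_smul', Pi.smul_apply, innerSL_apply_apply, smul_eq_mul,
      nsmul_eq_mul, Nat.cast_ofNat] at this
    have hexp : ‖v - u‖^2 = ‖v‖^2 - 2 * inner ℝ u v + ‖u‖^2 := by
      rw [norm_sub_sq_real]; ring_nf; rw [real_inner_comm]; ring
    have hiv : (inner ℝ u (v - u) : ℝ) = inner ℝ u v - ‖u‖^2 := by
      rw [inner_sub_right, real_inner_self_eq_norm_sq]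
    rw [hiv] at this
    rw [hexp]
    nlinarith [this]
  -- gradient of g
  have hgd : ∀ x, HasFDerivAt g ((fderiv ℝ f (A x)).comp AC) x := by
    intro x
    have : HasFDerivAt (fun y => f (AC y)) ((fderiv ℝ f (A x)).comp AC) x :=
      ((hdiff (A x)).hasFDerivAt).comp x AC.hasFDerivAt
    exact this.congr_of_eventuallyEq (by filter_upwards with y; rw [hg y]; rfl)
  have hgrad : ∀ x v, (inner ℝ (gradient g x) v : ℝ) = fderiv ℝ f (A x) (A v) := by
    intro x v
    have h1 : HasGradientAt g (gradient g x) x :=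
      ((hgd x).differentiableAt).hasGradientAt
    have h2 : HasFDerivAt g (toDual ℝ _ (gradient g x)) x :=
      hasGradientAt_iff_hasFDerivAt.mp h1
    have h3 := h2.unique (hgd x)
    have := congrArg (fun (L : EuclideanSpace ℝ (Fin n) →L[ℝ] ℝ) => L v) h3
    simpa [toDual_apply_apply, hACA] using this
  -- antilipschitz constant on the orthogonal complement of the kernel
  set K : Submodule ℝ (EuclideanSpace ℝ (Fin n)) := LinearMap.ker A with hK
  obtain ⟨c, hc, hcl⟩ : ∃ c : NNReal, 0 < c ∧ AntilipschitzWith c (A.comp Kᗮ.subtype) := by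
    have hker : LinearMap.ker (A.comp Kᗮ.subtype) = ⊥ := by
      rw [LinearMap.ker_eq_bot]
      intro v w hvw
      have hv' : ((v : EuclideanSpace ℝ (Fin n)) - w) ∈ Kᗮ := Kᗮ.sub_mem v.2 w.2
      have hvw' : A (v : EuclideanSpace ℝ (Fin n)) = A (w : EuclideanSpace ℝ (Fin n)) := hvw
      have hvK : ((v : EuclideanSpace ℝ (Fin n)) - w) ∈ K := by
        simp only [hK, LinearMap.mem_ker, map_sub]
        rw [hvw', sub_self]
      have : ((v : EuclideanSpace ℝ (Fin n)) - w) = 0 := by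
        have := hv' _ hvK
        exact inner_self_eq_zero.mp this
      exact Subtype.ext (sub_eq_zero.mp this)
    obtain ⟨c, hc, hcl⟩ := (A.comp Kᗮ.subtype).exists_antilipschitzWith hker
    exact ⟨c, hc, hcl⟩
  have hcpos : (0:ℝ) < (c:ℝ) := hc
  have hbound : ∀ v : EuclideanSpace ℝ (Fin n), v ∈ Kᗮ → ‖v‖ ≤ (c:ℝ) * ‖A v‖ := by
    intro v hv
    have := hcl.le_mul_dist ⟨v, hv⟩ 0
    simpa [dist_eq_norm] using this
  refine ⟨μ / (c:ℝ)^2, by positivity, fun x => ?_⟩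
  rw [hginf]
  set w : EuclideanSpace ℝ (Fin n) := x - x₀ with hw
  set w₂ : EuclideanSpace ℝ (Fin n) := w - (K.orthogonalProjectionOnto w : EuclideanSpace ℝ (Fin n))
    with hw₂
  have hw₂mem : w₂ ∈ Kᗮ := Submodule.sub_starProjection_mem_orthogonal (K := K) w
  have hAw : A w₂ = A w := by
    have hmem : ((K.orthogonalProjectionOnto w : EuclideanSpace ℝ (Fin n))) ∈ K :=
      (K.orthogonalProjectionOnto w).2
    rw [hw₂, map_sub]
    rw [hK] at hmem
    rw [LinearMap.mem_ker.mp hmem, sub_zero]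
  -- main estimate
  have hmain : g x - g x₀ ≤ fderiv ℝ f (A x) (A w) - μ/2 * ‖A w‖^2 := by
    have := hSC (A x) (A x₀)
    have hsub : A x₀ - A x = -(A w) := by rw [hw, map_sub]; abel
    rw [hsub] at this
    simp only [map_neg, norm_neg] at this
    rw [hg x, hg x₀]
    linarith
  have hinner : fderiv ℝ f (A x) (A w) = inner ℝ (gradient g x) w₂ := by
    rw [← hAw, ← hgrad]
  set p := gradient g x with hp
  set r := ‖w₂‖ with hr
  have hrA : r ≤ (c:ℝ) * ‖A w‖ := by rw [← hAw]; exact hbound w₂ hw₂mem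
  have hAwnn : (0:ℝ) ≤ ‖A w‖ := norm_nonneg _
  have hineq : g x - g x₀ ≤ ‖p‖ * r - μ/(2*(c:ℝ)^2) * r^2 := by
    have h1 : (inner ℝ p w₂ : ℝ) ≤ ‖p‖ * r := real_inner_le_norm p w₂
    have h2 : μ/(2*(c:ℝ)^2) * r^2 ≤ μ/2 * ‖A w‖^2 := by
      have hrnn : (0:ℝ) ≤ r := norm_nonneg _
      have hr2 : r^2 ≤ ((c:ℝ) * ‖A w‖)^2 := by nlinarith
      have hle : μ/(2*(c:ℝ)^2) * r^2 ≤ μ/(2*(c:ℝ)^2) * ((c:ℝ) * ‖A w‖)^2 :=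
        mul_le_mul_of_nonneg_left hr2 (by positivity)
      have heq : μ/(2*(c:ℝ)^2) * ((c:ℝ) * ‖A w‖)^2 = μ/2 * ‖A w‖^2 := by
        field_simp
      linarith [hle, heq.le, heq.ge]
    calc g x - g x₀ ≤ fderiv ℝ f (A x) (A w) - μ/2 * ‖A w‖^2 := hmain
      _ = inner ℝ p w₂ - μ/2 * ‖A w‖^2 := by rw [hinner]
      _ ≤ ‖p‖ * r - μ/(2*(c:ℝ)^2) * r^2 := by linarith
  have hfinal : μ / (c:ℝ)^2 * (‖p‖ * r - μ/(2*(c:ℝ)^2) * r^2) ≤ 1/2 * ‖p‖^2 := by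
    have hhalf : μ/(2*(c:ℝ)^2) = (μ/(c:ℝ)^2)/2 := by ring
    rw [hhalf]
    set a := μ/(c:ℝ)^2 with ha
    nlinarith [sq_nonneg (‖p‖ - a * r)]
  calc μ / (c:ℝ)^2 * (g x - g x₀)
      ≤ μ / (c:ℝ)^2 * (‖p‖ * r - μ/(2*(c:ℝ)^2) * r^2) := by
        apply mul_le_mul_of_nonneg_left hineq (by positivity)
    _ ≤ 1/2 * ‖p‖^2 := hfinal
end

section
/- Let V : [0,∞) → [0,∞) be a differentiable function satisfying V'(t) ≤ −p V(t)^α − q V(t)^β whenever V(t) > 0, with p, q > 0, 0 < α < 1, β > 1. Then V(t) = 0 for all t ≥ T, where T = 1/(p(1−α)) + 1/(q(β−1)). -/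
open Set

/-- If `g` is differentiable on `[a,b]` with `deriv g ≤ -k` on `(a,b)`,
then `g b ≤ g a - k * (b - a)`. -/
lemma decay_aux (g : ℝ → ℝ) (k a b : ℝ) (hab : a ≤ b)
    (hdiff : ∀ t ∈ Icc a b, DifferentiableAt ℝ g t)
    (hd : ∀ t ∈ Ioo a b, deriv g t ≤ -k) :
    g b ≤ g a - k * (b - a) := by
  set h : ℝ → ℝ := fun t => g t + k * t with hh
  have hdiffh : ∀ t ∈ Icc a b, DifferentiableAt ℝ h t := fun t ht =>
    (hdiff t ht).add ((differentiable_id.const_mul k).differentiableAt)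
  have hanti : AntitoneOn h (Icc a b) := by
    apply antitoneOn_of_deriv_nonpos (convex_Icc a b)
    · exact fun t ht => (hdiffh t ht).continuousAt.continuousWithinAt
    · intro t ht
      rw [interior_Icc] at ht
      exact ((hdiffh t (Ioo_subset_Icc_self ht)).differentiableWithinAt)
    · intro t ht
      rw [interior_Icc] at ht
      have h1 : HasDerivAt h (deriv g t + k) t := by
        have := ((hdiff t (Ioo_subset_Icc_self ht)).hasDerivAt).add
          ((hasDerivAt_id t).const_mul k)
        simp only [mul_one] at this
        exact this
      rw [h1.deriv]
      have := hd t ht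
      linarith
  have := hanti (left_mem_Icc.mpr hab) (right_mem_Icc.mpr hab) hab
  simp only [hh] at this
  linarith

theorem stmt_3 (V : ℝ → ℝ) (p q α β : ℝ)
    (hp : 0 < p) (hq : 0 < q) (hα : 0 < α) (hα1 : α < 1) (hβ : 1 < β)
    (hVnn : ∀ t ≥ 0, 0 ≤ V t) (hVdiff : Differentiable ℝ V)
    (hineq : ∀ t ≥ (0:ℝ), 0 < V t → deriv V t ≤ -p * (V t) ^ α - q * (V t) ^ β) :
    ∀ t ≥ 1 / (p * (1 - α)) + 1 / (q * (β - 1)), V t = 0 := by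
  have hpα : 0 < p * (1 - α) := by nlinarith
  have hqβ : 0 < q * (β - 1) := by nlinarith
  set T2 : ℝ := 1 / (p * (1 - α)) with hT2
  set T1 : ℝ := 1 / (q * (β - 1)) with hT1
  have hT1pos : 0 < T1 := by rw [hT1]; exact one_div_pos.mpr hqβ
  have hT2pos : 0 < T2 := by rw [hT2]; exact one_div_pos.mpr hpα
  set T : ℝ := T2 + T1 with hT
  have hTpos : 0 < T := by rw [hT]; linarith
  -- V is antitone on [0, ∞)
  have hanti : AntitoneOn V (Ici 0) := by
    apply antitoneOn_of_deriv_nonpos (convex_Ici 0)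
      hVdiff.continuous.continuousOn hVdiff.differentiableOn
    intro t ht
    rw [interior_Ici] at ht
    rcases lt_or_eq_of_le (hVnn t (le_of_lt ht)) with hVt | hVt
    · have := hineq t (le_of_lt ht) hVt
      have h1 : 0 < (V t) ^ α := Real.rpow_pos_of_pos hVt α
      have h2 : 0 < (V t) ^ β := Real.rpow_pos_of_pos hVt β
      nlinarith
    · -- V t = 0 : local min
      have hmin : IsLocalMin V t := by
        filter_upwards [Ioi_mem_nhds ht] with s hs
        rw [← hVt]
        exact hVnn s (le_of_lt (mem_Ioi.mp hs))
      rw [hmin.deriv_eq_zero]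
  -- key claim: V T = 0
  have hVT : V T = 0 := by
    by_contra hne
    have hVTpos : 0 < V T := lt_of_le_of_ne (hVnn T hTpos.le) (Ne.symm hne)
    have hpos : ∀ t ∈ Icc 0 T, 0 < V t := fun t ht =>
      lt_of_lt_of_le hVTpos (hanti (mem_Ici.mpr ht.1) (mem_Ici.mpr (ht.1.trans ht.2)) ht.2)
    -- Step 1: V T1 < 1, using Z = V ^ (1 - β)
    have hderZ : ∀ t ∈ Icc 0 T, HasDerivAt (fun s => V s ^ (1 - β))
        (deriv V t * (1 - β) * V t ^ (1 - β - 1)) t :=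
      fun t ht => (hVdiff t).hasDerivAt.rpow_const (Or.inl (hpos t ht).ne')
    have hT1T : T1 ≤ T := by rw [hT]; linarith
    have hZbound : ∀ t ∈ Ioo 0 T1, deriv (fun s => -(V s ^ (1 - β))) t ≤ -(q * (β - 1)) := by
      intro t ht
      have htT : t ∈ Icc 0 T := ⟨ht.1.le, ht.2.le.trans hT1T⟩
      have hVt := hpos t htT
      have hder := hderZ t htT
      have hderiv : deriv (fun s => -(V s ^ (1 - β))) t
          = -(deriv V t * (1 - β) * V t ^ (1 - β - 1)) := by
        rw [deriv.fun_neg, hder.deriv]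
      rw [hderiv]
      have hdV := hineq t ht.1.le hVt
      have hC : 0 < V t ^ (1 - β - 1) := Real.rpow_pos_of_pos hVt _
      have hAC : V t ^ α * V t ^ (1 - β - 1) = V t ^ (α - β) := by
        rw [← Real.rpow_add hVt]; ring_nf
      have hBC : V t ^ β * V t ^ (1 - β - 1) = V t ^ (0 : ℝ) := by
        rw [← Real.rpow_add hVt]; ring_nf
      rw [Real.rpow_zero] at hBC
      have hACnn : 0 < V t ^ (α - β) := Real.rpow_pos_of_pos hVt _
      have hmul := mul_le_mul_of_nonneg_right hdV hC.le
      have h1 : (1 - β) * ((-p * V t ^ α - q * V t ^ β) * V t ^ (1 - β - 1))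
          ≤ (1 - β) * (deriv V t * V t ^ (1 - β - 1)) :=
        mul_le_mul_of_nonpos_left hmul (by linarith)
      have h2 : (1 - β) * ((-p * V t ^ α - q * V t ^ β) * V t ^ (1 - β - 1))
          = (β - 1) * (p * (V t ^ α * V t ^ (1 - β - 1)) + q * (V t ^ β * V t ^ (1 - β - 1))) := by
        ring
      rw [h2, hAC, hBC] at h1
      nlinarith [h1, mul_pos hp hACnn]
    have hZdiff : ∀ t ∈ Icc 0 T1, DifferentiableAt ℝ (fun s => -(V s ^ (1 - β))) t :=
      fun t ht => ((hderZ t ⟨ht.1, ht.2.trans hT1T⟩).differentiableAt).neg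
    have hZ := decay_aux (fun s => -(V s ^ (1 - β))) (q * (β - 1)) 0 T1 hT1pos.le hZdiff hZbound
    -- -(V T1 ^ (1-β)) ≤ -(V 0 ^ (1-β)) - q(β-1) * T1 = -(V 0 ^ (1-β)) - 1
    have hqT1 : q * (β - 1) * (T1 - 0) = 1 := by
      rw [hT1]; field_simp [(by linarith : (0:ℝ) < β - 1).ne']; ring
    have hZ0 : 0 < V 0 ^ (1 - β) := Real.rpow_pos_of_pos (hpos 0 ⟨le_refl 0, hTpos.le⟩) _
    have hZT1 : 1 < V T1 ^ (1 - β) := by linarith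
    have hVT1 : V T1 < 1 := by
      by_contra hge
      push_neg at hge
      have := Real.rpow_le_one_of_one_le_of_nonpos hge (by linarith : 1 - β ≤ 0)
      linarith
    -- Step 2: U = V ^ (1 - α) on [T1, T]
    have hderU : ∀ t ∈ Icc 0 T, HasDerivAt (fun s => V s ^ (1 - α))
        (deriv V t * (1 - α) * V t ^ (1 - α - 1)) t :=
      fun t ht => (hVdiff t).hasDerivAt.rpow_const (Or.inl (hpos t ht).ne')
    have hsub : Icc T1 T ⊆ Icc 0 T := Icc_subset_Icc hT1pos.le le_rfl
    have hUbound : ∀ t ∈ Ioo T1 T, deriv (fun s => V s ^ (1 - α)) t ≤ -(p * (1 - α)) := by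
      intro t ht
      have htT : t ∈ Icc 0 T := ⟨hT1pos.le.trans ht.1.le, ht.2.le⟩
      have hVt := hpos t htT
      have hder := hderU t htT
      rw [hder.deriv]
      have hdV := hineq t (hT1pos.le.trans ht.1.le) hVt
      have hC : 0 < V t ^ (1 - α - 1) := Real.rpow_pos_of_pos hVt _
      have hAC : V t ^ α * V t ^ (1 - α - 1) = V t ^ (0 : ℝ) := by
        rw [← Real.rpow_add hVt]; ring_nf
      rw [Real.rpow_zero] at hAC
      have hBC : V t ^ β * V t ^ (1 - α - 1) = V t ^ (β - α) := by
        rw [← Real.rpow_add hVt]; ring_nf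
      have hBCnn : 0 < V t ^ (β - α) := Real.rpow_pos_of_pos hVt _
      have hmul := mul_le_mul_of_nonneg_right hdV hC.le
      have h1 : (1 - α) * (deriv V t * V t ^ (1 - α - 1))
          ≤ (1 - α) * ((-p * V t ^ α - q * V t ^ β) * V t ^ (1 - α - 1)) :=
        mul_le_mul_of_nonneg_left hmul (by linarith)
      have h2 : (1 - α) * ((-p * V t ^ α - q * V t ^ β) * V t ^ (1 - α - 1))
          = -((1 - α) * (p * (V t ^ α * V t ^ (1 - α - 1)) + q * (V t ^ β * V t ^ (1 - α - 1)))) := by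
        ring
      rw [h2, hAC, hBC] at h1
      nlinarith [h1, mul_pos hq hBCnn]
    have hUdiff : ∀ t ∈ Icc T1 T, DifferentiableAt ℝ (fun s => V s ^ (1 - α)) t :=
      fun t ht => (hderU t (hsub ht)).differentiableAt
    have hU := decay_aux (fun s => V s ^ (1 - α)) (p * (1 - α)) T1 T hT1T hUdiff hUbound
    have hpT : p * (1 - α) * (T - T1) = 1 := by
      rw [hT, hT2]; field_simp [(by linarith : (0:ℝ) < 1 - α).ne']; ring
    have hUT1 : V T1 ^ (1 - α) < 1 :=
      Real.rpow_lt_one (hpos T1 ⟨hT1pos.le, hT1T⟩).le hVT1 (by linarith)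
    have hUT : 0 < V T ^ (1 - α) := Real.rpow_pos_of_pos hVTpos _
    nlinarith
  -- conclude
  intro t ht
  have ht' : T ≤ t := by rw [hT]; linarith
  have hle : V t ≤ V T := hanti (mem_Ici.mpr hTpos.le) (mem_Ici.mpr (hTpos.le.trans ht')) ht'
  have := hVnn t (hTpos.le.trans ht')
  linarith [hVT ▸ hle]
end

section
/- Let V : [0,∞) → [0,∞) be differentiable with V'(t) ≤ −p V(t)^α for all t with V(t) > 0, where p > 0 and 0 < α < 1. Then V(t) = 0 for all t ≥ V(0)^{1−α}/(p(1−α)) (finite-time convergence with settling time depending on the initial condition). -/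
/-- Once `V` hits zero, it stays zero. -/
lemma persist_zero (V : ℝ → ℝ) (p α : ℝ)
    (hp : 0 < p) (hα : 0 < α)
    (hVnn : ∀ t ≥ 0, 0 ≤ V t) (hVdiff : Differentiable ℝ V)
    (hineq : ∀ t ≥ (0:ℝ), 0 < V t → deriv V t ≤ -p * (V t) ^ α)
    {s t1 : ℝ} (hs : 0 ≤ s) (hst : s ≤ t1) (hVs : V s = 0) : V t1 = 0 := by
  by_contra h
  have ht1 : 0 ≤ t1 := hs.trans hst
  have hVt1 : 0 < V t1 := (hVnn t1 ht1).lt_of_ne (Ne.symm h)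
  set S : Set ℝ := Set.Icc s t1 ∩ V ⁻¹' {0} with hS
  have hSclosed : IsClosed S :=
    isClosed_Icc.inter (isClosed_singleton.preimage hVdiff.continuous)
  have hSne : S.Nonempty := ⟨s, ⟨le_refl s, hst⟩, hVs⟩
  have hSbdd : BddAbove S := ⟨t1, fun x hx => hx.1.2⟩
  obtain ⟨⟨hu1, hu2⟩, hVu⟩ : sSup S ∈ S := hSclosed.csSup_mem hSne hSbdd
  set u := sSup S with hudef
  have hVu : V u = 0 := hVu
  have hu0 : 0 ≤ u := hs.trans hu1
  have hut1 : u < t1 := lt_of_le_of_ne hu2 (by rintro h'; rw [h'] at hVu; exact h hVu)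
  have hpos : ∀ x ∈ Set.Ioc u t1, 0 < V x := by
    intro x hx
    rcases (hVnn x (hu0.trans hx.1.le)).lt_or_eq with h' | h'
    · exact h'
    · exfalso
      have : x ∈ S := ⟨⟨hu1.trans hx.1.le, hx.2⟩, h'.symm⟩
      exact absurd (le_csSup hSbdd this) (not_le.mpr hx.1)
  have hanti : StrictAntiOn V (Set.Icc u t1) := by
    apply strictAntiOn_of_deriv_neg (convex_Icc u t1) hVdiff.continuous.continuousOn
    intro x hx
    rw [interior_Icc] at hx
    have hx0 : 0 ≤ x := hu0.trans hx.1.le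
    have hVx : 0 < V x := hpos x ⟨hx.1, hx.2.le⟩
    calc deriv V x ≤ -p * (V x) ^ α := hineq x hx0 hVx
      _ < 0 := by
        have := Real.rpow_pos_of_pos hVx α
        nlinarith
  have : V t1 < V u :=
    hanti ⟨le_refl u, hut1.le⟩ ⟨hut1.le, le_refl t1⟩ hut1
  rw [hVu] at this
  exact absurd this (not_lt.mpr (hVnn t1 ht1))

theorem stmt_4 (V : ℝ → ℝ) (p α : ℝ)
    (hp : 0 < p) (hα : 0 < α) (hα1 : α < 1)
    (hVnn : ∀ t ≥ 0, 0 ≤ V t) (hVdiff : Differentiable ℝ V)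
    (hineq : ∀ t ≥ (0:ℝ), 0 < V t → deriv V t ≤ -p * (V t) ^ α) :
    ∀ t ≥ (V 0) ^ (1 - α) / (p * (1 - α)), V t = 0 := by
  intro t ht
  have h1α : 0 < 1 - α := by linarith
  have hpα : 0 < p * (1 - α) := mul_pos hp h1α
  have hT0 : 0 ≤ (V 0) ^ (1 - α) / (p * (1 - α)) := by
    apply div_nonneg _ hpα.le
    exact Real.rpow_nonneg (hVnn 0 le_rfl) _
  have ht0 : 0 ≤ t := hT0.trans ht
  by_contra h
  have hVt : 0 < V t := (hVnn t ht0).lt_of_ne (Ne.symm h)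
  -- V is positive on all of [0, t]
  have hpos : ∀ x ∈ Set.Icc (0:ℝ) t, 0 < V x := by
    intro x hx
    rcases (hVnn x hx.1).lt_or_eq with h' | h'
    · exact h'
    · exact absurd (persist_zero V p α hp hα hVnn hVdiff hineq hx.1 hx.2 h'.symm)
        (ne_of_gt hVt)
  -- comparison function
  set g : ℝ → ℝ := fun s => V s ^ (1 - α) + p * (1 - α) * s with hg
  have hganti : AntitoneOn g (Set.Icc 0 t) := by
    apply antitoneOn_of_deriv_nonpos (convex_Icc 0 t)
    · apply ContinuousOn.add
      · exact hVdiff.continuous.continuousOn.rpow_const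
          fun x hx => Or.inl (hpos x hx).ne'
      · exact (continuous_const.mul continuous_id).continuousOn
    · intro x hx
      rw [interior_Icc] at hx
      have hVx : 0 < V x := hpos x ⟨hx.1.le, hx.2.le⟩
      have hd : HasDerivAt g
          (deriv V x * ((1 - α) * V x ^ (1 - α - 1)) + p * (1 - α)) x := by
        have h1 := ((hVdiff x).hasDerivAt).rpow_const (p := 1 - α) (Or.inl hVx.ne')
        have h2 : HasDerivAt (fun s : ℝ => p * (1 - α) * s) (p * (1 - α)) x := by
          simpa using (hasDerivAt_id x).const_mul (p * (1 - α))
        simpa [hg, mul_assoc, Pi.add_def] using h1.add h2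
      exact hd.differentiableAt.differentiableWithinAt
    · intro x hx
      rw [interior_Icc] at hx
      have hVx : 0 < V x := hpos x ⟨hx.1.le, hx.2.le⟩
      have hd : HasDerivAt g
          (deriv V x * ((1 - α) * V x ^ (1 - α - 1)) + p * (1 - α)) x := by
        have h1 := ((hVdiff x).hasDerivAt).rpow_const (p := 1 - α) (Or.inl hVx.ne')
        have h2 : HasDerivAt (fun s : ℝ => p * (1 - α) * s) (p * (1 - α)) x := by
          simpa using (hasDerivAt_id x).const_mul (p * (1 - α))
        simpa [hg, mul_assoc, Pi.add_def] using h1.add h2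
      rw [hd.deriv]
      have hderivle := hineq x hx.1.le hVx
      have hxp : 0 < V x ^ (1 - α - 1) := Real.rpow_pos_of_pos hVx _
      have hmul : deriv V x * ((1 - α) * V x ^ (1 - α - 1)) ≤
          (-p * V x ^ α) * ((1 - α) * V x ^ (1 - α - 1)) := by
        apply mul_le_mul_of_nonneg_right hderivle
        positivity
      have hcancel : V x ^ α * V x ^ (1 - α - 1) = V x ^ (0:ℝ) := by
        rw [← Real.rpow_add hVx]; ring_nf
      have hone : V x ^ α * V x ^ (1 - α - 1) = 1 := by
        rw [hcancel, Real.rpow_zero]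
      have hrhs : -p * V x ^ α * ((1 - α) * V x ^ (1 - α - 1)) = -(p * (1 - α)) := by
        calc -p * V x ^ α * ((1 - α) * V x ^ (1 - α - 1))
            = -(p * (1 - α)) * (V x ^ α * V x ^ (1 - α - 1)) := by ring
          _ = -(p * (1 - α)) := by rw [hone, mul_one]
      linarith [hmul, hrhs.le, hrhs.ge]
  have hgle : g t ≤ g 0 :=
    hganti (Set.left_mem_Icc.mpr ht0) ⟨ht0, le_refl t⟩ ht0
  have hg0 : g 0 = V 0 ^ (1 - α) := by simp [hg]
  have hkey : p * (1 - α) * t ≥ V 0 ^ (1 - α) := by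
    rw [ge_iff_le, ← div_le_iff₀' hpα] at *
    exact ht
  have hVtpos : 0 < V t ^ (1 - α) := Real.rpow_pos_of_pos hVt _
  have : V t ^ (1 - α) + p * (1 - α) * t ≤ V 0 ^ (1 - α) := by
    rw [← hg0]; exact hgle
  linarith
end

section
/- Let f : ℝⁿ → ℝ be C¹, attain its minimum f* and satisfy the PL inequality with constant μ > 0. Then f satisfies the quadratic growth condition: f(x) − f* ≥ (μ/2) dist(x, X*)², where X* is the set of global minimizers of f (assumed nonempty and closed). -/
set_option maxHeartbeats 1000000

open Metric InnerProductSpace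

theorem stmt_14 {n : ℕ} (f : EuclideanSpace ℝ (Fin n) → ℝ) (fstar : ℝ) (μ : ℝ)
    (hf : ContDiff ℝ 1 f) (hμ : 0 < μ)
    (hmin : ∃ x₀, f x₀ = fstar) (hlb : ∀ x, fstar ≤ f x)
    (hPL : ∀ x, μ * (f x - fstar) ≤ (1/2) * ‖gradient f x‖^2)
    (Xstar : Set (EuclideanSpace ℝ (Fin n))) (hXstar : Xstar = {x | f x = fstar})
    (hclosed : IsClosed Xstar) :
    ∀ x, (μ / 2) * (Metric.infDist x Xstar)^2 ≤ f x - fstar := by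
  intro x
  -- notation
  set g : EuclideanSpace ℝ (Fin n) → ℝ := fun z => Real.sqrt (f z - fstar) with hg
  have hXne : Xstar.Nonempty := by
    obtain ⟨x₀, hx₀⟩ := hmin
    exact ⟨x₀, by simp [hXstar, hx₀]⟩
  have hdist0 : 0 ≤ infDist x Xstar := infDist_nonneg
  have hc : (0:ℝ) < Real.sqrt (μ/2) := Real.sqrt_pos.mpr (by linarith)
  set c : ℝ := Real.sqrt (μ/2) with hcdef
  have hgnn : ∀ z, 0 ≤ g z := fun z => Real.sqrt_nonneg _
  have hgx_sq : (g x)^2 = f x - fstar := Real.sq_sqrt (by linarith [hlb x])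
  -- gradient norm equals fderiv norm
  have hgradnorm : ∀ z, ‖gradient f z‖ = ‖fderiv ℝ f z‖ := by
    intro z
    rw [gradient]
    exact (toDual ℝ (EuclideanSpace ℝ (Fin n))).symm.norm_map _
  -- key claim : infDist x Xstar ≤ g x / c
  have key : infDist x Xstar ≤ g x / c := by
    by_contra hcon
    push_neg at hcon
    -- hcon : g x / c < infDist x Xstar
    set δ : ℝ := (infDist x Xstar + g x / c) / 2 with hδdef
    have hδ1 : g x / c < δ := by rw [hδdef]; linarith
    have hδ2 : δ < infDist x Xstar := by rw [hδdef]; linarith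
    have hδpos : 0 < δ := lt_of_le_of_lt (div_nonneg (hgnn x) hc.le) hδ1
    set σ : ℝ := (g x / δ + c) / 2 with hσdef
    have hσ1 : g x / δ < σ := by
      have : g x / δ < c := (div_lt_iff₀ hδpos).mpr (by
        have := (div_lt_iff₀ hc).mp hδ1
        linarith [this])
      rw [hσdef]; linarith
    have hσ2 : σ < c := by
      have : g x / δ < c := by
        have := (div_lt_iff₀ hc).mp hδ1
        exact (div_lt_iff₀ hδpos).mpr (by linarith)
      rw [hσdef]; linarith
    have hσpos : 0 < σ := lt_of_le_of_lt (div_nonneg (hgnn x) hδpos.le) hσ1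
    -- minimize G on closed ball
    have hgcont : Continuous g := (hf.continuous.sub continuous_const).sqrt
    have hGcont : Continuous fun z => g z + σ * ‖z - x‖ :=
      hgcont.add (continuous_const.mul ((continuous_id.sub continuous_const).norm))
    obtain ⟨y, hyball, hymin⟩ := (isCompact_closedBall x δ).exists_isMinOn
      ⟨x, mem_closedBall_self hδpos.le⟩ hGcont.continuousOn
    have hyx : g y + σ * ‖y - x‖ ≤ g x := by
      have := hymin (mem_closedBall_self hδpos.le)
      simpa using this
    have hynx : ‖y - x‖ < δ := by
      have h1 : σ * ‖y - x‖ ≤ g x := le_trans (by linarith [hgnn y]) hyx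
      have h2 : g x < σ * δ := by
        have := (div_lt_iff₀ hδpos).mp hσ1
        linarith
      nlinarith [h1, h2, hσpos]
    -- y not in Xstar
    have hyXstar : y ∉ Xstar := by
      intro hy
      have : infDist x Xstar ≤ ‖y - x‖ := by
        have := infDist_le_dist_of_mem (x := x) hy
        rwa [dist_eq_norm, ← norm_sub_rev y x] at this
      linarith
    have hfy : fstar < f y := by
      rcases lt_or_eq_of_le (hlb y) with h | h
      · exact h
      · exact absurd (by simp [hXstar, h.symm]) hyXstar
    have hgy_pos : 0 < g y := Real.sqrt_pos.mpr (by linarith)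
    -- derivative of g at y
    have hfd : HasFDerivAt f (fderiv ℝ f y) y :=
      (hf.differentiable one_ne_zero y).hasFDerivAt
    have hfd' : HasFDerivAt (fun z => f z - fstar) (fderiv ℝ f y) y := hfd.sub_const _
    have hL : HasFDerivAt g ((1 / (2 * Real.sqrt (f y - fstar))) • fderiv ℝ f y) y :=
      hfd'.sqrt (by linarith)
    set L := (1 / (2 * Real.sqrt (f y - fstar))) • fderiv ℝ f y with hLdef
    -- lower bound on directional behaviour: for all v, -σ‖v‖ ≤ L v
    have hdir : ∀ v : EuclideanSpace ℝ (Fin n), -(σ * ‖v‖) ≤ L v := by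
      intro v
      have hline : HasDerivAt (fun t : ℝ => g (y + t • v)) (L v) 0 := by
        have hin : HasDerivAt (fun t : ℝ => y + t • v) v 0 := by
          simpa using ((hasDerivAt_id (0:ℝ)).smul_const v).const_add y
        have hL' : HasFDerivAt g L (y + (0:ℝ) • v) := by
          rw [zero_smul, add_zero]; exact hL
        exact hL'.comp_hasDerivAt 0 hin
      have hslope := hasDerivAt_iff_tendsto_slope.mp hline
      have hslope' : Filter.Tendsto (slope (fun t : ℝ => g (y + t • v)) 0)
          (nhdsWithin 0 (Set.Ioi 0)) (nhds (L v)) :=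
        hslope.mono_left (nhdsWithin_mono _ (fun t ht => ne_of_gt ht))
      refine ge_of_tendsto hslope' ?_
      -- eventually for small t > 0, slope ≥ -σ‖v‖
      have hopen : ∀ᶠ t in nhdsWithin (0:ℝ) (Set.Ioi 0), y + t • v ∈ closedBall x δ := by
        have hcontt : Continuous fun t : ℝ => y + t • v :=
          continuous_const.add (continuous_id.smul continuous_const)
        have : ∀ᶠ t in nhds (0:ℝ), y + t • v ∈ ball x δ := by
          have hy0 : y + (0:ℝ) • v ∈ ball x δ := by
            simpa [mem_ball, dist_eq_norm] using hynx
          exact hcontt.continuousAt.eventually_mem (isOpen_ball.mem_nhds hy0)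
        exact (this.mono fun t ht => ball_subset_closedBall ht).filter_mono
          nhdsWithin_le_nhds
      filter_upwards [hopen, self_mem_nhdsWithin] with t hmem (htpos : t ∈ Set.Ioi 0)
      have htpos' : (0:ℝ) < t := htpos
      have hzmin := hymin hmem
      -- g (y + t•v) + σ‖y + t•v - x‖ ≥ g y + σ‖y - x‖
      have h1 : g y + σ * ‖y - x‖ ≤ g (y + t • v) + σ * ‖y + t • v - x‖ := hzmin
      have h2 : ‖y + t • v - x‖ ≤ ‖t • v‖ + ‖y - x‖ := by
        have : y + t • v - x = (t • v) + (y - x) := by abel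
        rw [this]; exact norm_add_le _ _
      have h3 : g y - σ * ‖t • v‖ ≤ g (y + t • v) := by nlinarith [hσpos]
      have hnorm : ‖t • v‖ = t * ‖v‖ := by
        rw [norm_smul, Real.norm_eq_abs, abs_of_pos htpos']
      have hsl : slope (fun t : ℝ => g (y + t • v)) 0 t
          = (g (y + t • v) - g y) / t := by
        rw [slope_def_field]; simp
      rw [hsl, le_div_iff₀ htpos']
      nlinarith [h3]
    -- hence ‖L‖ ≤ σ
    have hLnorm : ‖L‖ ≤ σ := by
      refine ContinuousLinearMap.opNorm_le_bound _ hσpos.le fun v => ?_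
      have h1 := hdir v
      have h2 := hdir (-v)
      rw [map_neg, norm_neg] at h2
      rw [Real.norm_eq_abs, abs_le]
      constructor <;> linarith
    -- but PL gives ‖L‖ ≥ c
    have hFnorm : Real.sqrt (2 * μ * (f y - fstar)) ≤ ‖fderiv ℝ f y‖ := by
      have hpl := hPL y
      rw [hgradnorm y] at hpl
      have : 2 * μ * (f y - fstar) ≤ ‖fderiv ℝ f y‖^2 := by linarith
      calc Real.sqrt (2 * μ * (f y - fstar)) ≤ Real.sqrt (‖fderiv ℝ f y‖^2) :=
            Real.sqrt_le_sqrt this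
        _ = ‖fderiv ℝ f y‖ := Real.sqrt_sq (norm_nonneg _)
    have hLnorm2 : ‖L‖ = ‖fderiv ℝ f y‖ / (2 * Real.sqrt (f y - fstar)) := by
      rw [hLdef, norm_smul, Real.norm_eq_abs, abs_of_pos (by positivity)]
      ring
    have hclb : c ≤ ‖L‖ := by
      rw [hLnorm2, le_div_iff₀ (by positivity)]
      have hsq : Real.sqrt (2 * μ * (f y - fstar))
          = Real.sqrt (2 * μ) * Real.sqrt (f y - fstar) := by
        rw [← Real.sqrt_mul (by positivity)]
      have h2m : c * 2 = Real.sqrt (2 * μ) := by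
        have e1 : (2:ℝ) * μ = (μ/2) * 2^2 := by ring
        rw [hcdef, e1, Real.sqrt_mul (by linarith), Real.sqrt_sq (by norm_num : (0:ℝ) ≤ 2)]
      calc c * (2 * Real.sqrt (f y - fstar)) = (c * 2) * Real.sqrt (f y - fstar) := by ring
        _ = Real.sqrt (2 * μ) * Real.sqrt (f y - fstar) := by rw [h2m]
        _ = Real.sqrt (2 * μ * (f y - fstar)) := hsq.symm
        _ ≤ ‖fderiv ℝ f y‖ := hFnorm
    linarith
  -- finish: dist ≤ g x / c ⇒ (μ/2) dist² ≤ (g x)² = f x - fstar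
  have h1 : (infDist x Xstar)^2 ≤ (g x / c)^2 := by
    apply pow_le_pow_left₀ hdist0 key
  have h2 : (g x / c)^2 = (f x - fstar) / (μ/2) := by
    rw [div_pow, hgx_sq, hcdef, Real.sq_sqrt (by linarith)]
  rw [h2] at h1
  calc (μ / 2) * (infDist x Xstar)^2 ≤ (μ/2) * ((f x - fstar) / (μ/2)) := by
        apply mul_le_mul_of_nonneg_left h1 (by linarith)
    _ = f x - fstar := by field_simp
end

section
/- Let F : ℝⁿ × ℝᵐ → ℝ be C¹, satisfy the two-sided PL inequality with constants μ₁, μ₂, and suppose the mixed Lipschitz bound ‖∇_x F(x,y) − ∇_x F(x,y')‖ ≤ c‖y − y'‖ and ‖∇_y F(x,y) − ∇_y F(x',y)‖ ≤ c‖x − x'‖ hold with 0 ≤ c < min{μ₁/2, μ₂/2}. Then along the saddle-point dynamics ẋ = −∇_x F, ẏ = ∇_y F, the function V(x,y) = 2(max_{y'}F(x,y') − min_{x'}F(x',y)) satisfies d/dt V(x(t),y(t)) ≤ −(1 − 2c/μ)‖∇F(x(t),y(t))‖², where μ = min{μ₁, μ₂}. -/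
open Filter Topology InnerProductSpace Set

section Aux

variable {E : Type*} [NormedAddCommGroup E] [InnerProductSpace ℝ E] [CompleteSpace E]

/-- If `w` is an Ekeland-type approximate minimizer, the gradient at `w` is small. -/
lemma norm_grad_le_of_forall_le {f : E → ℝ} {w G : E} (hG : HasGradientAt f G w)
    {κ : ℝ} (hκ : 0 ≤ κ) (h : ∀ z, f w ≤ f z + κ * ‖z - w‖) : ‖G‖ ≤ κ := by
  rcases eq_or_ne G 0 with h0 | h0
  · simpa [h0] using hκ
  have hc : HasDerivAt (fun t : ℝ => w - t • G) (-G) 0 := by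
    simpa using ((hasDerivAt_id (0:ℝ)).smul_const G).const_sub w
  have hcomp : HasDerivAt (fun t : ℝ => f (w - t • G)) (-‖G‖^2) 0 := by
    have h1 : HasFDerivAt f (toDual ℝ E G) ((fun t : ℝ => w - t • G) 0) := by
      simpa using hG.hasFDerivAt
    have h2 := h1.comp_hasDerivAt 0 hc
    have h3 : (toDual ℝ E G) (-G) = -‖G‖^2 := by
      rw [toDual_apply_apply, inner_neg_right, real_inner_self_eq_norm_sq]
    have h4 : HasDerivAt (fun t : ℝ => f (w - t • G)) ((toDual ℝ E G) (-G)) 0 := h2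
    rwa [h3] at h4
  have hslope := hasDerivAt_iff_tendsto_slope.mp hcomp
  have hmono : Tendsto (slope (fun t : ℝ => f (w - t • G)) 0) (𝓝[>] (0:ℝ)) (𝓝 (-‖G‖^2)) :=
    hslope.mono_left (nhdsWithin_mono 0 (fun t ht => ne_of_gt ht))
  have hge : -(κ * ‖G‖) ≤ -‖G‖^2 := by
    refine ge_of_tendsto hmono ?_
    filter_upwards [self_mem_nhdsWithin] with t ht
    have ht' : (0:ℝ) < t := ht
    have hz := h (w - t • G)
    have hnorm : ‖(w - t • G) - w‖ = t * ‖G‖ := by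
      have : (w - t • G) - w = -(t • G) := by abel
      rw [this, norm_neg, norm_smul, Real.norm_eq_abs, abs_of_pos ht']
    rw [slope_def_field]
    simp only [zero_smul, sub_zero]
    rw [le_div_iff₀ ht']
    have := hz
    rw [hnorm] at this
    nlinarith
  have hGpos : 0 < ‖G‖ := norm_pos_iff.mpr h0
  nlinarith

/-- Ekeland's variational principle (smooth form, functions bounded below by `0`). -/
lemma ekeland_aux {f : E → ℝ} (hf : Continuous f) (h0 : ∀ z, 0 ≤ f z)
    (y : E) {κ lam : ℝ} (hκ : 0 < κ) (hεκ : f y ≤ κ * lam) :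
    ∃ w, f w ≤ f y ∧ ‖w - y‖ ≤ lam ∧ ∀ z, f w ≤ f z + κ * ‖z - w‖ := by
  classical
  set S : E → Set E := fun w => {z | f z + κ * ‖z - w‖ ≤ f w} with hS
  have hmem : ∀ w, w ∈ S w := fun w => by simp [hS]
  have htrans : ∀ w z z', z ∈ S w → z' ∈ S z → z' ∈ S w := by
    intro w z z' h1 h2
    simp only [hS, mem_setOf_eq] at h1 h2 ⊢
    have tri : ‖z' - w‖ ≤ ‖z' - z‖ + ‖z - w‖ := norm_sub_le_norm_sub_add_norm_sub _ _ _
    have := mul_le_mul_of_nonneg_left tri hκ.le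
    nlinarith
  have hbdd : ∀ w, BddBelow (f '' S w) := by
    intro w
    refine ⟨0, ?_⟩
    rintro v ⟨z, _, rfl⟩
    exact h0 z
  have hSne : ∀ w, (f '' S w).Nonempty := fun w => ⟨f w, w, hmem w, rfl⟩
  have hstep : ∀ (k : ℕ) (w : E), ∃ z, z ∈ S w ∧ f z ≤ sInf (f '' S w) + (1/2)^k := by
    intro k w
    have hpos : (0:ℝ) < (1/2)^k := by positivity
    obtain ⟨v, ⟨z, hzS, rfl⟩, hv⟩ :=
      exists_lt_of_csInf_lt (hSne w) (lt_add_of_pos_right _ hpos)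
    exact ⟨z, hzS, hv.le⟩
  let u : ℕ → E := fun k => Nat.rec (motive := fun _ => E) y (fun k w => (hstep k w).choose) k
  have huS : ∀ k, u (k+1) ∈ S (u k) := fun k => ((hstep k (u k)).choose_spec).1
  have huf : ∀ k, f (u (k+1)) ≤ sInf (f '' S (u k)) + (1/2)^k :=
    fun k => ((hstep k (u k)).choose_spec).2
  have hchain : ∀ k j, k ≤ j → u j ∈ S (u k) := by
    intro k j
    induction j with
    | zero => intro h; obtain rfl := Nat.le_zero.mp h; exact hmem _
    | succ j ih =>
      intro h
      rcases Nat.lt_or_ge k (j+1) with hlt | hge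
      · exact htrans _ _ _ (ih (Nat.lt_succ_iff.mp hlt)) (huS j)
      · obtain rfl : k = j + 1 := le_antisymm h hge
        exact hmem _
  have hball : ∀ k, ∀ z ∈ S (u (k+1)), κ * ‖z - u (k+1)‖ ≤ (1/2)^k := by
    intro k z hz
    have hz' : z ∈ S (u k) := htrans _ _ _ (huS k) hz
    have h1 : sInf (f '' S (u k)) ≤ f z := csInf_le (hbdd _) ⟨z, hz', rfl⟩
    have h2 : f z + κ * ‖z - u (k+1)‖ ≤ f (u (k+1)) := hz
    linarith [huf k]
  set C := max lam (2/κ) with hC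
  have hcons : ∀ n, dist (u n) (u (n+1)) ≤ C * (1/2)^n := by
    intro n
    cases n with
    | zero =>
      show dist (u 0) (u 1) ≤ C * (1/2:ℝ)^0
      have h1 : f (u 1) + κ * ‖u 1 - y‖ ≤ f y := huS 0
      have h2 : κ * ‖u 1 - y‖ ≤ κ * lam := by linarith [h0 (u 1)]
      have hd : ‖u 1 - y‖ ≤ lam := le_of_mul_le_mul_left h2 hκ
      have hrw : dist (u 0) (u 1) = ‖u 1 - y‖ := by
        rw [dist_eq_norm, norm_sub_rev]; exact rfl
      rw [hrw]
      calc ‖u 1 - y‖ ≤ lam := hd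
        _ ≤ C := le_max_left _ _
        _ = C * (1/2)^0 := by norm_num
    | succ n =>
      show dist (u (n+1)) (u (n+2)) ≤ C * (1/2:ℝ)^(n+1)
      have h1 := hball n (u (n+2)) (huS (n+1))
      have hdd : dist (u (n+1)) (u (n+2)) = ‖u (n+2) - u (n+1)‖ := by
        rw [dist_eq_norm, norm_sub_rev]
      rw [hdd]
      have h2 : ‖u (n+2) - u (n+1)‖ ≤ (1/2)^n / κ := by
        rw [le_div_iff₀ hκ]; linarith
      have h3 : (1/2:ℝ)^n / κ = (2/κ) * (1/2)^(n+1) := by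
        field_simp; ring
      have h4 : (2/κ) * (1/2:ℝ)^(n+1) ≤ C * (1/2)^(n+1) := by
        have : (0:ℝ) ≤ (1/2:ℝ)^(n+1) := by positivity
        exact mul_le_mul_of_nonneg_right (le_max_right _ _) this
      linarith [h2, h3.le]
  have hcauchy : CauchySeq u := cauchySeq_of_le_geometric (1/2) C (by norm_num) hcons
  obtain ⟨w, hw⟩ := cauchySeq_tendsto_of_complete hcauchy
  have hSclosed : ∀ v, IsClosed (S v) :=
    fun v => isClosed_le (hf.add (continuous_const.mul ((continuous_id.sub continuous_const).norm)))
      continuous_const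
  have hwS : ∀ k, w ∈ S (u k) := by
    intro k
    apply (hSclosed (u k)).mem_of_tendsto hw
    filter_upwards [eventually_ge_atTop k] with j hj
    exact hchain k j hj
  have hw0 : f w + κ * ‖w - y‖ ≤ f y := hwS 0
  have hnn : 0 ≤ κ * ‖w - y‖ := mul_nonneg hκ.le (norm_nonneg _)
  refine ⟨w, by linarith, ?_, ?_⟩
  · have h2 : κ * ‖w - y‖ ≤ κ * lam := by linarith [h0 w]
    exact le_of_mul_le_mul_left h2 hκ
  · intro z
    by_contra hcon
    push_neg at hcon
    have hzw : z ∈ S w := le_of_lt hcon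
    have hzk : ∀ k, z ∈ S (u k) := fun k => htrans _ _ _ (hwS k) hzw
    have h1 : ∀ k, f (u (k+1)) - (1/2:ℝ)^k ≤ f z := by
      intro k
      have := csInf_le (hbdd (u k)) ⟨z, hzk k, rfl⟩
      linarith [huf k]
    have h2 : Tendsto (fun k => f (u (k+1)) - (1/2:ℝ)^k) atTop (𝓝 (f w - 0)) := by
      apply Tendsto.sub
      · exact (hf.tendsto w).comp (hw.comp (tendsto_add_atTop_nat 1))
      · exact tendsto_pow_atTop_nhds_zero_of_lt_one (by norm_num) (by norm_num)
    have h3 : f w - 0 ≤ f z := le_of_tendsto h2 (Eventually.of_forall h1)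
    have h4 : 0 ≤ κ * ‖z - w‖ := mul_nonneg hκ.le (norm_nonneg _)
    linarith

/-- PL inequality implies quadratic-growth-type error bound (with constant `2/μ`). -/
lemma error_bound {μ : ℝ} (hμ : 0 < μ) {f : E → ℝ} {g : E → E}
    (hg : ∀ z, HasGradientAt f (g z) z) (h0 : ∀ z, 0 ≤ f z)
    (hPL : ∀ z, 2 * μ * f z ≤ ‖g z‖ ^ 2) (b : E) :
    ∃ p, f p = 0 ∧ ‖b - p‖ ≤ 2 * ‖g b‖ / μ := by
  classical
  have hdiff : Differentiable ℝ f := fun z => (hg z).differentiableAt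
  have hfc : Continuous f := hdiff.continuous
  have hstep : ∀ w : E, ∃ w', f w' ≤ f w / 4 ∧ dist w w' ≤ Real.sqrt (2 * f w / μ) := by
    intro w
    rcases eq_or_lt_of_le (h0 w) with h | h
    · exact ⟨w, by rw [← h]; norm_num, by rw [dist_self]; exact Real.sqrt_nonneg _⟩
    · set lam := Real.sqrt (2 * f w / μ) with hlam
      have hlampos : 0 < lam := Real.sqrt_pos.mpr (div_pos (by linarith) hμ)
      set κ := f w / lam with hκdef
      have hκpos : 0 < κ := div_pos h hlampos
      have hκlam : f w ≤ κ * lam := by rw [hκdef]; field_simp; exact le_rfl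
      obtain ⟨w', hw1, hw2, hw3⟩ := ekeland_aux hfc h0 w hκpos hκlam
      have hgrad : ‖g w'‖ ≤ κ := norm_grad_le_of_forall_le (hg w') hκpos.le hw3
      have hlamsq : lam^2 = 2 * f w / μ := Real.sq_sqrt (div_nonneg (by linarith) hμ.le)
      have hκsq : κ^2 = μ * f w / 2 := by
        rw [hκdef, div_pow, hlamsq]
        field_simp
      have h5 : ‖g w'‖^2 ≤ κ^2 := pow_le_pow_left₀ (norm_nonneg _) hgrad 2
      have h4 : f w' ≤ f w / 4 := by nlinarith [hPL w']
      exact ⟨w', h4, by rw [dist_eq_norm, norm_sub_rev]; exact hw2⟩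
  let u : ℕ → E := fun k => Nat.rec (motive := fun _ => E) b (fun _ w => (hstep w).choose) k
  have hdec : ∀ k, f (u (k+1)) ≤ f (u k) / 4 := fun k => ((hstep (u k)).choose_spec).1
  have hdist : ∀ k, dist (u k) (u (k+1)) ≤ Real.sqrt (2 * f (u k) / μ) :=
    fun k => ((hstep (u k)).choose_spec).2
  have hfk : ∀ k, f (u k) ≤ f b * (1/4)^k := by
    intro k
    induction k with
    | zero =>
      have hub : u 0 = b := rfl
      rw [hub]; norm_num
    | succ k ih =>
      calc f (u (k+1)) ≤ f (u k) / 4 := hdec k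
        _ ≤ f b * (1/4)^k / 4 := by linarith
        _ = f b * (1/4)^(k+1) := by ring
  set D := Real.sqrt (2 * f b / μ) with hD
  have hgeo : ∀ k, dist (u k) (u (k+1)) ≤ D * (1/2)^k := by
    intro k
    refine (hdist k).trans ?_
    have h2 : ((1/2:ℝ)^k)^2 = (1/4)^k := by
      rw [← pow_mul, mul_comm k 2, pow_mul]; norm_num
    have h1 : 2 * f (u k) / μ ≤ (2 * f b / μ) * ((1/2)^k)^2 := by
      rw [h2]
      have h3 : 2 * f (u k) ≤ 2 * f b * (1/4)^k := by linarith [hfk k]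
      rw [div_mul_eq_mul_div, div_le_div_iff₀ hμ hμ]
      nlinarith [hμ]
    calc Real.sqrt (2 * f (u k) / μ) ≤ Real.sqrt ((2 * f b / μ) * ((1/2)^k)^2) :=
          Real.sqrt_le_sqrt h1
      _ = D * (1/2)^k := by
          rw [Real.sqrt_mul (div_nonneg (by linarith [h0 b]) hμ.le), Real.sqrt_sq (by positivity)]
  have hcauchy : CauchySeq u := cauchySeq_of_le_geometric (1/2) D (by norm_num) hgeo
  obtain ⟨p, hp⟩ := cauchySeq_tendsto_of_complete hcauchy
  have hfp : f p = 0 := by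
    have h1 : Tendsto (fun k => f (u k)) atTop (𝓝 (f p)) := (hfc.tendsto p).comp hp
    have h2 : Tendsto (fun k : ℕ => f b * (1/4:ℝ)^k) atTop (𝓝 0) := by
      simpa using
        (tendsto_pow_atTop_nhds_zero_of_lt_one (by norm_num : (0:ℝ) ≤ 1/4) (by norm_num)).const_mul (f b)
    have hle : f p ≤ 0 := le_of_tendsto_of_tendsto' h1 h2 hfk
    exact le_antisymm hle (h0 p)
  refine ⟨p, hfp, ?_⟩
  have hdistb : dist (u 0) p ≤ D / (1 - 1/2) :=
    dist_le_of_le_geometric_of_tendsto₀ (1/2) D (by norm_num) hgeo hp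
  have h6 : ‖b - p‖ ≤ 2 * D := by
    have : dist (u 0) p = ‖b - p‖ := by rw [dist_eq_norm]; exact rfl
    rw [this] at hdistb
    have hDnn : 0 ≤ D := Real.sqrt_nonneg _
    calc ‖b - p‖ ≤ D / (1 - 1/2) := hdistb
      _ = 2 * D := by rw [div_eq_mul_inv]; norm_num; ring
  have h7 : D ≤ ‖g b‖ / μ := by
    have h8 : 2 * f b / μ ≤ (‖g b‖ / μ)^2 := by
      rw [div_pow, div_le_div_iff₀ hμ (by positivity)]
      nlinarith [hPL b, hμ]
    calc D ≤ Real.sqrt ((‖g b‖ / μ)^2) := Real.sqrt_le_sqrt h8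
      _ = ‖g b‖ / μ := Real.sqrt_sq (by positivity)
  calc ‖b - p‖ ≤ 2 * D := h6
    _ ≤ 2 * (‖g b‖ / μ) := by linarith
    _ = 2 * ‖g b‖ / μ := by ring

/-- Two differentiable functions touching at a common extremal point have the same gradient. -/
lemma grad_eq_of_le_of_eq {f₁ f₂ : E → ℝ} {a : E} {G₁ G₂ : E}
    (h₁ : HasGradientAt f₁ G₁ a) (h₂ : HasGradientAt f₂ G₂ a)
    (hle : ∀ z, f₁ z ≤ f₂ z) (heq : f₁ a = f₂ a) : G₁ = G₂ := by
  have hmin : IsLocalMin (fun z => f₂ z - f₁ z) a := by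
    refine Eventually.of_forall (fun z => ?_)
    simp only
    have := hle z
    linarith [heq.ge, heq.le, hle z]
  have hd : HasFDerivAt (fun z => f₂ z - f₁ z) (toDual ℝ E G₂ - toDual ℝ E G₁) a :=
    h₂.hasFDerivAt.sub h₁.hasFDerivAt
  have h0 := hmin.hasFDerivAt_eq_zero hd
  have h1 : toDual ℝ E G₂ = toDual ℝ E G₁ := by rwa [sub_eq_zero] at h0
  exact ((toDual ℝ E).injective h1).symm

end Aux

set_option maxHeartbeats 1000000 in
theorem stmt_17 {n m : ℕ} (F : EuclideanSpace ℝ (Fin n) → EuclideanSpace ℝ (Fin m) → ℝ)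
    (μ₁ μ₂ c : ℝ) (hμ₁ : 0 < μ₁) (hμ₂ : 0 < μ₂) (hc : 0 ≤ c)
    (hcsmall : 2 * c < min μ₁ μ₂)
    (hF : ContDiff ℝ 1 (fun p : EuclideanSpace ℝ (Fin n) × EuclideanSpace ℝ (Fin m) => F p.1 p.2))
    (xbar : EuclideanSpace ℝ (Fin m) → EuclideanSpace ℝ (Fin n))
    (ybar : EuclideanSpace ℝ (Fin n) → EuclideanSpace ℝ (Fin m))
    (hxbar : ∀ y x, F (xbar y) y ≤ F x y)
    (hybar : ∀ x y, F x y ≤ F x (ybar x))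
    (hPL₁ : ∀ x y, 2 * μ₁ * (F x y - F (xbar y) y) ≤ ‖gradient (fun x' => F x' y) x‖^2)
    (hPL₂ : ∀ x y, 2 * μ₂ * (F x (ybar x) - F x y) ≤ ‖gradient (fun y' => F x y') y‖^2)
    (hLipx : ∀ x y y', ‖gradient (fun x' => F x' y) x - gradient (fun x' => F x' y') x‖ ≤ c * ‖y - y'‖)
    (hLipy : ∀ y x x', ‖gradient (fun y' => F x y') y - gradient (fun y' => F x' y') y‖ ≤ c * ‖x - x'‖)
    (hDanskin₁ : ∀ x, HasGradientAt (fun x' => F x' (ybar x')) (gradient (fun x' => F x' (ybar x)) x) x)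
    (hDanskin₂ : ∀ y, HasGradientAt (fun y' => F (xbar y') y') (gradient (fun y' => F (xbar y) y') y) y)
    (x : ℝ → EuclideanSpace ℝ (Fin n)) (y : ℝ → EuclideanSpace ℝ (Fin m))
    (hx : ∀ t, HasDerivAt x (-(gradient (fun x' => F x' (y t)) (x t))) t)
    (hy : ∀ t, HasDerivAt y (gradient (fun y' => F (x t) y') (y t)) t)
    (V : EuclideanSpace ℝ (Fin n) → EuclideanSpace ℝ (Fin m) → ℝ)
    (hV : ∀ x' y', V x' y' = 2 * (F x' (ybar x') - F (xbar y') y')) :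
    ∀ t, deriv (fun s => V (x s) (y s)) t ≤
      -(1 - 2 * c / min μ₁ μ₂) *
        (‖gradient (fun x' => F x' (y t)) (x t)‖^2 +
         ‖gradient (fun y' => F (x t) y') (y t)‖^2) := by
  have hFd : Differentiable ℝ (fun p : EuclideanSpace ℝ (Fin n) × EuclideanSpace ℝ (Fin m) => F p.1 p.2) :=
    hF.differentiable one_ne_zero
  have hdx : ∀ (y₀ : EuclideanSpace ℝ (Fin m)) (x₀ : EuclideanSpace ℝ (Fin n)),
      DifferentiableAt ℝ (fun x' => F x' y₀) x₀ := fun y₀ x₀ =>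
    by have h : DifferentiableAt ℝ (fun x' : EuclideanSpace ℝ (Fin n) => (x', y₀)) x₀ := differentiableAt_id.prodMk (differentiableAt_const y₀); exact (hFd (x₀, y₀)).comp x₀ h
  have hdy : ∀ (x₀ : EuclideanSpace ℝ (Fin n)) (y₀ : EuclideanSpace ℝ (Fin m)),
      DifferentiableAt ℝ (fun y' => F x₀ y') y₀ := fun x₀ y₀ =>
    (hFd (x₀, y₀)).comp y₀ ((differentiableAt_const x₀).prodMk differentiableAt_id)
  intro t
  set μ := min μ₁ μ₂ with hμdef
  have hμ : 0 < μ := lt_min hμ₁ hμ₂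
  set a := x t with ha
  set b := y t with hb
  set gx := gradient (fun x' => F x' b) a with hgx
  set gy := gradient (fun y' => F a y') b with hgy
  set Gx := gradient (fun x' => F x' (ybar a)) a with hGx
  set Gy := gradient (fun y' => F (xbar b) y') b with hGy
  -- derivative of V along the trajectory
  have hfun : (fun s => V (x s) (y s)) = fun s => 2 * (F (x s) (ybar (x s)) - F (xbar (y s)) (y s)) :=
    funext fun s => hV _ _
  have hd1 : HasDerivAt (fun s => F (x s) (ybar (x s))) ((inner ℝ Gx (-gx)) : ℝ) t := by
    have h := (hDanskin₁ (x t)).hasFDerivAt.comp_hasDerivAt t (hx t)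
    have h2 : HasDerivAt (fun s => F (x s) (ybar (x s))) ((toDual ℝ _ Gx) (-gx)) t := h
    rwa [InnerProductSpace.toDual_apply_apply] at h2
  have hd2 : HasDerivAt (fun s => F (xbar (y s)) (y s)) ((inner ℝ Gy gy) : ℝ) t := by
    have h := (hDanskin₂ (y t)).hasFDerivAt.comp_hasDerivAt t (hy t)
    have h2 : HasDerivAt (fun s => F (xbar (y s)) (y s)) ((toDual ℝ _ Gy) gy) t := h
    rwa [InnerProductSpace.toDual_apply_apply] at h2
  have hD : HasDerivAt (fun s => V (x s) (y s)) (2 * (((inner ℝ Gx (-gx)) : ℝ) - ((inner ℝ Gy gy) : ℝ))) t := by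
    rw [hfun]
    exact (hd1.sub hd2).const_mul 2
  rw [hD.deriv]
  -- error bound in y : find a maximizer p of F a · close to b
  have hgy' : ∀ z, HasGradientAt (fun z' => F a (ybar a) - F a z')
      (-(gradient (fun y' => F a y') z)) z := by
    intro z
    have h1 := (hdy a z).hasGradientAt
    have h2 : HasFDerivAt (fun z' => F a (ybar a) - F a z')
        (-(InnerProductSpace.toDual ℝ _ (gradient (fun y' => F a y') z))) z :=
      HasFDerivAt.const_sub h1.hasFDerivAt _
    rw [hasGradientAt_iff_hasFDerivAt, map_neg]
    exact h2
  obtain ⟨p, hp0, hpd⟩ := error_bound hμ₂ hgy'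
      (fun z => sub_nonneg.mpr (hybar a z))
      (fun z => by rw [norm_neg]; exact hPL₂ a z) b
  have hFp : F a p = F a (ybar a) := by linarith [sub_eq_zero.mp hp0]
  -- error bound in x : find a minimizer q of F · b close to a
  have hgx' : ∀ z, HasGradientAt (fun z' => F z' b - F (xbar b) b)
      (gradient (fun x' => F x' b) z) z := by
    intro z
    have h1 := (hdx b z).hasGradientAt
    rw [hasGradientAt_iff_hasFDerivAt]
    exact h1.hasFDerivAt.sub_const _
  obtain ⟨q, hq0, hqd⟩ := error_bound hμ₁ hgx'
      (fun z => sub_nonneg.mpr (hxbar b z))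
      (fun z => hPL₁ z b) a
  have hFq : F q b = F (xbar b) b := sub_eq_zero.mp hq0
  -- Danskin at arbitrary maximizers: Gx is also the partial gradient at p
  have hGxp : gradient (fun x' => F x' p) a = Gx := by
    refine grad_eq_of_le_of_eq ((hdx p a).hasGradientAt) (hDanskin₁ a)
      (fun z => hybar z p) hFp
  have hGyq : Gy = gradient (fun y' => F q y') b := by
    refine grad_eq_of_le_of_eq (hDanskin₂ b) ((hdy q b).hasGradientAt)
      (fun y' => hxbar y' q) hFq.symm
  -- Lipschitz estimates
  have hex : ‖gx - Gx‖ ≤ 2 * c / μ * ‖gy‖ := by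
    have h1 : ‖gx - Gx‖ ≤ c * ‖b - p‖ := by
      rw [← hGxp]
      exact hLipx a b p
    have hpd' : ‖b - p‖ ≤ 2 * ‖gy‖ / μ₂ := by rw [← norm_neg gy]; exact hpd
    have h2 : c * ‖b - p‖ ≤ c * (2 * ‖gy‖ / μ₂) :=
      mul_le_mul_of_nonneg_left hpd' hc
    have h3 : c * (2 * ‖gy‖ / μ₂) ≤ c * (2 * ‖gy‖ / μ) :=
      mul_le_mul_of_nonneg_left
        (div_le_div_of_nonneg_left (by positivity) hμ (min_le_right _ _)) hc
    calc ‖gx - Gx‖ ≤ c * (2 * ‖gy‖ / μ) := le_trans h1 (le_trans h2 h3)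
      _ = 2 * c / μ * ‖gy‖ := by ring
  have hey : ‖gy - Gy‖ ≤ 2 * c / μ * ‖gx‖ := by
    have h1 : ‖gy - Gy‖ ≤ c * ‖a - q‖ := by
      rw [hGyq]
      exact hLipy b a q
    have h2 : c * ‖a - q‖ ≤ c * (2 * ‖gx‖ / μ₁) :=
      mul_le_mul_of_nonneg_left hqd hc
    have h3 : c * (2 * ‖gx‖ / μ₁) ≤ c * (2 * ‖gx‖ / μ) :=
      mul_le_mul_of_nonneg_left
        (div_le_div_of_nonneg_left (by positivity) hμ (min_le_left _ _)) hc
    calc ‖gy - Gy‖ ≤ c * (2 * ‖gx‖ / μ) := le_trans h1 (le_trans h2 h3)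
      _ = 2 * c / μ * ‖gx‖ := by ring
  -- final algebra
  set r := 2 * c / μ with hr
  have hr0 : 0 ≤ r := div_nonneg (by linarith) hμ.le
  have hr1 : r ≤ 1 := (div_le_one hμ).mpr (le_of_lt hcsmall)
  set nx := ‖gx‖ with hnx
  set ny := ‖gy‖ with hny
  have hnx0 : 0 ≤ nx := norm_nonneg _
  have hny0 : 0 ≤ ny := norm_nonneg _
  have hsplit1 : ((inner ℝ Gx (-gx)) : ℝ) = -nx^2 - ((inner ℝ (Gx - gx) gx) : ℝ) := by
    rw [inner_neg_right, inner_sub_left, real_inner_self_eq_norm_sq]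
    ring
  have hsplit2 : ((inner ℝ Gy gy) : ℝ) = ny^2 + ((inner ℝ (Gy - gy) gy) : ℝ) := by
    rw [inner_sub_left, real_inner_self_eq_norm_sq]
    ring
  have hCS1 : |((inner ℝ (Gx - gx) gx) : ℝ)| ≤ (r * ny) * nx := by
    refine (abs_real_inner_le_norm _ _).trans ?_
    apply mul_le_mul_of_nonneg_right _ hnx0
    rw [norm_sub_rev]
    exact hex
  have hCS2 : |((inner ℝ (Gy - gy) gy) : ℝ)| ≤ (r * nx) * ny := by
    refine (abs_real_inner_le_norm _ _).trans ?_
    apply mul_le_mul_of_nonneg_right _ hny0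
    rw [norm_sub_rev]
    exact hey
  have hA : ((inner ℝ Gx (-gx)) : ℝ) ≤ -nx^2 + (r * ny) * nx := by
    have := neg_abs_le ((inner ℝ (Gx - gx) gx) : ℝ)
    have := abs_le.mp hCS1
    rw [hsplit1]
    linarith [hCS1, (abs_le.mp hCS1).1]
  have hB : ny^2 - (r * nx) * ny ≤ ((inner ℝ Gy gy) : ℝ) := by
    rw [hsplit2]
    linarith [(abs_le.mp hCS2).1]
  nlinarith [mul_nonneg hr0 (sq_nonneg (nx - ny)), mul_nonneg (sub_nonneg.mpr hr1) (sq_nonneg nx),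
    mul_nonneg (sub_nonneg.mpr hr1) (sq_nonneg ny), sq_nonneg (nx - ny)]
end

section
/- Let f : ℝⁿ → ℝ be C¹, bounded below with infimum f* attained, and satisfy the PL inequality with constant μ > 0. Let x(t) solve the normalized gradient flow ẋ = −∇f(x)/‖∇f(x)‖^{(p−2)/(p−1)} with 1 < p < 2, away from critical points. Then V(t) := f(x(t)) − f* satisfies V'(t) ≤ −(2μ)^{b} V(t)^{b} with b = (2 − (p−2)/(p−1))/2 > 1. -/
theorem stmt_19 {n : ℕ} (f : EuclideanSpace ℝ (Fin n) → ℝ) (fstar : ℝ) (μ p : ℝ)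
    (hf : ContDiff ℝ 1 f) (hμ : 0 < μ) (hp1 : 1 < p) (hp2 : p < 2)
    (hmin : ∃ x₀, f x₀ = fstar) (hlb : ∀ x, fstar ≤ f x)
    (hPL : ∀ x, μ * (f x - fstar) ≤ (1/2) * ‖gradient f x‖^2)
    (x : ℝ → EuclideanSpace ℝ (Fin n))
    (hne : ∀ t, gradient f (x t) ≠ 0)
    (hx : ∀ t, HasDerivAt x
      (-(‖gradient f (x t)‖ ^ ((p - 2)/(p - 1)))⁻¹ • gradient f (x t)) t) :
    ∀ t, deriv (fun s => f (x s) - fstar) t ≤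
      -((2 * μ) ^ ((2 - (p - 2)/(p - 1))/2)) *
        (f (x t) - fstar) ^ ((2 - (p - 2)/(p - 1))/2) := by
  intro t
  set α : ℝ := (p - 2)/(p - 1) with hα
  set b : ℝ := (2 - α)/2 with hb
  set g := gradient f (x t) with hgdef
  have hgne : g ≠ 0 := hne t
  have hgpos : 0 < ‖g‖ := norm_pos_iff.mpr hgne
  have hαneg : α < 0 := div_neg_of_neg_of_pos (by linarith) (by linarith)
  have hbpos : 0 < b := by
    rw [hb]; exact div_pos (by linarith) two_pos
  have hcpos : 0 < ‖g‖ ^ α := Real.rpow_pos_of_pos hgpos α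
  -- derivative of the composition
  have hgrad : HasGradientAt f g (x t) := ((hf.differentiable one_ne_zero) (x t)).hasGradientAt
  have hcomp : HasDerivAt (fun s => f (x s) - fstar)
      (inner ℝ g (-(‖g‖ ^ α)⁻¹ • g) : ℝ) t := by
    have h1 := hgrad.hasFDerivAt.comp_hasDerivAt t (hx t)
    simp only [InnerProductSpace.toDual_apply_apply] at h1
    exact (h1.sub_const fstar)
  have hderiv : deriv (fun s => f (x s) - fstar) t = -(‖g‖ ^ (2 - α)) := by
    rw [hcomp.deriv, real_inner_smul_right, real_inner_self_eq_norm_sq,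
      Real.rpow_sub hgpos]
    rw [show ((2:ℝ)) = ((2:ℕ):ℝ) by norm_num, Real.rpow_natCast]
    field_simp
  rw [hderiv]
  have hV : 0 ≤ f (x t) - fstar := sub_nonneg.mpr (hlb _)
  have h1 : 2 * μ * (f (x t) - fstar) ≤ ‖g‖ ^ (2:ℕ) := by
    have := hPL (x t)
    rw [← hgdef] at this
    nlinarith [this]
  have h2 : (2 * μ * (f (x t) - fstar)) ^ b ≤ (‖g‖ ^ (2:ℕ)) ^ b :=
    Real.rpow_le_rpow (by positivity) h1 hbpos.le
  have h3 : (‖g‖ ^ (2:ℕ)) ^ b = ‖g‖ ^ (2 - α) := by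
    rw [← Real.rpow_natCast ‖g‖ 2, ← Real.rpow_mul hgpos.le]
    norm_num [hb]
    ring_nf
  have h4 : (2 * μ * (f (x t) - fstar)) ^ b = (2 * μ) ^ b * (f (x t) - fstar) ^ b :=
    Real.mul_rpow (by positivity) hV
  rw [h3, h4] at h2
  linarith
end
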